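/- Let F be a finite collection of finite sets, each of cardinality α > 0, such that |⋂Γ₁ − ⋃Γ₂| = |⋂Γ₂ − ⋃Γ₁| for every partition {Γ₁,Γ₂} of F into two non-empty subcollections, and suppose the same hypothesis holds hereditarily for every subcollection of F. Then |⋃F| + |⋂F| = 2α. -/
import Mathlib

open Finset

/-- Union of a finite collection of finite sets. -/
def collU {α : Type*} [DecidableEq α] (Γ : Finset (Finset α)) : Finset α :=
  Γ.sup id

/-- Intersection of a finite collection of finite sets
(equals the usual intersection when the collection is non-empty). -/
def collI {α : Type*} [DecidableEq α] (Γ : Finset (Finset α)) : Finset α :=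
  (Γ.sup id).filter (fun x => ∀ S ∈ Γ, x ∈ S)

/-- `e Γ = |⋃Γ| + |⋂Γ|` as an integer. -/
def collE {α : Type*} [DecidableEq α] (Γ : Finset (Finset α)) : ℤ :=
  (collU Γ).card + (collI Γ).card

/-- `F` is a hereditary König–Egerváry collection with common cardinality `a`. -/
def IsHKE {α : Type*} [DecidableEq α] (F : Finset (Finset α)) (a : ℕ) : Prop :=
  (∀ S ∈ F, S.card = a) ∧
  ∀ Γ ⊆ F, Γ.Nonempty → collE Γ = 2 * (a : ℤ)

lemma collU_insert' {α : Type*} [DecidableEq α] (S : Finset α) (Γ : Finset (Finset α)) :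
    collU (insert S Γ) = S ∪ collU Γ := by
  simp [collU, Finset.sup_insert]

lemma collI_singleton' {α : Type*} [DecidableEq α] (S : Finset α) :
    collI {S} = S := by
  ext x; simp [collI, collU]

lemma collU_singleton' {α : Type*} [DecidableEq α] (S : Finset α) :
    collU {S} = S := by
  simp [collU]

lemma collI_insert' {α : Type*} [DecidableEq α] (S : Finset α) (Γ : Finset (Finset α))
    (hΓ : Γ.Nonempty) : collI (insert S Γ) = S ∩ collI Γ := by
  ext x
  simp only [collI, mem_filter, mem_inter, mem_insert, Finset.sup_insert, id,
    Finset.mem_union, Finset.mem_sup, Finset.sup_eq_union]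
  constructor
  · rintro ⟨-, h⟩
    obtain ⟨T, hT⟩ := hΓ
    exact ⟨h S (Or.inl rfl), ⟨T, hT, h T (Or.inr hT)⟩, fun T hT => h T (Or.inr hT)⟩
  · rintro ⟨hS, ⟨T, hT, hxT⟩, h⟩
    refine ⟨Or.inr ⟨T, hT, hxT⟩, ?_⟩
    rintro T (rfl | hT)
    · exact hS
    · exact h T hT

theorem stmt_19 {α : Type*} [DecidableEq α] (F : Finset (Finset α))
    (hF : F.Nonempty) (a : ℕ) (ha : 0 < a)
    (hsize : ∀ S ∈ F, S.card = a)
    (hdual : ∀ Γ ⊆ F, ∀ Γ₁ Γ₂ : Finset (Finset α),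
      Γ₁ ∪ Γ₂ = Γ → Disjoint Γ₁ Γ₂ → Γ₁.Nonempty → Γ₂.Nonempty →
      (collI Γ₁ \ collU Γ₂).card = (collI Γ₂ \ collU Γ₁).card) :
    (collU F).card + (collI F).card = 2 * a := by
  classical
  induction F using Finset.strongInduction with
  | _ F ih =>
  obtain ⟨S, hS⟩ := hF
  by_cases hsing : F = {S}
  · subst hsing
    rw [collU_singleton', collI_singleton', hsize S (by simp)]
    ring
  · set Γ := F.erase S with hΓdef
    have hΓne : Γ.Nonempty := by
      rcases (F.erase S).eq_empty_or_nonempty with h | h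
      · exact absurd (eq_singleton_iff_unique_mem.mpr ⟨hS, fun x hx => by
          by_contra hne; exact (notMem_empty x) (h ▸ mem_erase.mpr ⟨hne, hx⟩)⟩) hsing
      · exact h
    have hΓsub : Γ ⊆ F := erase_subset _ _
    have hΓssub : Γ ⊂ F := erase_ssubset hS
    have hFins : F = insert S Γ := (insert_erase hS).symm
    have hIH : (collU Γ).card + (collI Γ).card = 2 * a :=
      ih Γ hΓssub hΓne (fun T hT => hsize T (hΓsub hT))
        (fun Δ hΔ Γ₁ Γ₂ h1 h2 h3 h4 => hdual Δ (hΔ.trans hΓsub) Γ₁ Γ₂ h1 h2 h3 h4)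
    have hkey : (collI {S} \ collU Γ).card = (collI Γ \ collU {S}).card := by
      refine hdual F (Finset.Subset.refl F) {S} Γ ?_ ?_ ⟨S, by simp⟩ hΓne
      · rw [hFins]; exact Finset.insert_eq S Γ ▸ rfl
      · exact Finset.disjoint_singleton_left.mpr (Finset.notMem_erase S F)
    rw [collI_singleton', collU_singleton'] at hkey
    have hU : (collU F).card = (collU Γ).card + (S \ collU Γ).card := by
      rw [hFins, collU_insert']
      rw [← Finset.card_sdiff_add_card]
      omega
    have hI : (collI F).card + (collI Γ \ S).card = (collI Γ).card := by
      rw [hFins, collI_insert' S Γ hΓne, Finset.inter_comm]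
      exact Finset.card_inter_add_card_sdiff _ _
    omega
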